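/- Hunt–Szymanski reduction: Let P and S be strings, and for each position i of P let M_S(P(i)) be the list of positions j of S with S(j)=P(i), listed in strictly decreasing order. Let L be the concatenation of M_S(P(1)), M_S(P(2)), ..., M_S(P(|P|)). Then the length of the longest strictly increasing subsequence of L equals the length of the longest common subsequence of P and S. -/

import Mathlib

open List

noncomputable def lcsLen {α : Type*} (P S : List α) : ℕ :=
  sSup {n | ∃ w : List α, w.Sublist P ∧ w.Sublist S ∧ w.length = n}

noncomputable def lisLen (L : List ℕ) : ℕ :=
  sSup {n | ∃ w : List ℕ, w.Sublist L ∧ w.Pairwise (· < ·) ∧ w.length = n}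

def huntList {α : Type*} [DecidableEq α] (P S : List α) : List ℕ :=
  (P.map (fun c => ((List.range S.length).filter (fun j => S[j]? = some c)).reverse)).flatten

section Aux

variable {α : Type*} [DecidableEq α]

lemma mem_block (S : List α) (c : α) (j : ℕ) :
    j ∈ ((List.range S.length).filter (fun j => S[j]? = some c)).reverse ↔
      j < S.length ∧ S[j]? = some c := by
  simp [List.mem_filter, List.mem_range]

lemma block_pairwise_gt (S : List α) (c : α) :
    ((List.range S.length).filter (fun j => S[j]? = some c)).reverse.Pairwise (· > ·) := by
  rw [List.pairwise_reverse]
  exact (List.pairwise_lt_range).filter _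

lemma sublist_cons_of_index {β : Type*} (a : β) :
    ∀ (j : ℕ) (l t : List β), l[j]? = some a → t <+ l.drop (j + 1) → a :: t <+ l := by
  intro j
  induction j with
  | zero =>
    intro l t h ht
    cases l with
    | nil => simp at h
    | cons b l' =>
      simp at h ht
      subst h
      exact ht.cons₂ _
  | succ j ih =>
    intro l t h ht
    cases l with
    | nil => simp at h
    | cons b l' =>
      simp only [List.getElem?_cons_succ] at h
      simp only [List.drop_succ_cons] at ht
      exact (ih l' t h ht).cons b

lemma exists_index_of_cons_sublist {β : Type*} (a : β) (t : List β) :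
    ∀ (u : List β), a :: t <+ u →
      ∃ m, m < u.length ∧ u[m]? = some a ∧ t <+ u.drop (m + 1) := by
  intro u
  induction u with
  | nil => intro h; exact absurd h (by simp)
  | cons b u' ih =>
    intro h
    cases h with
    | cons _ h' =>
      obtain ⟨m, hm, hma, hmt⟩ := ih h'
      exact ⟨m + 1, by simpa using hm, by simpa using hma, by simpa using hmt⟩
    | cons_cons _ h' =>
      exact ⟨0, by simp, by simp, by simpa using h'⟩

lemma forward (S : List α) :
    ∀ (P : List α) (w : List ℕ) (k : ℕ), w <+ huntList P S → w.Pairwise (· < ·) →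
      (∀ x ∈ w, k ≤ x) →
      ∃ v : List α, v <+ P ∧ v <+ S.drop k ∧ v.length = w.length := by
  intro P
  induction P with
  | nil =>
    intro w k hw _ _
    simp [huntList] at hw
    subst hw
    exact ⟨[], by simp⟩
  | cons p P' ih =>
    intro w k hw hs hk
    rw [huntList, List.map_cons, List.flatten_cons] at hw
    obtain ⟨w1, w2, rfl, hw1, hw2⟩ := List.sublist_append_iff.mp hw
    match w1 with
    | [] =>
      simp only [List.nil_append] at hs hk ⊢
      obtain ⟨v, hv1, hv2, hv3⟩ := ih w2 k hw2 hs hk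
      exact ⟨v, hv1.cons p, hv2, hv3⟩
    | a :: b :: t =>
      exfalso
      have h1 : a > b := List.rel_of_pairwise_cons
        (List.Pairwise.sublist hw1 (block_pairwise_gt S p)) (List.mem_cons_self (a := b) (l := t))
      have hp : (a :: b :: t).Pairwise (· < ·) := hs.sublist (List.sublist_append_left _ _)
      have h2 : a < b := List.rel_of_pairwise_cons hp (List.mem_cons_self (a := b) (l := t))
      omega
    | [j] =>
      obtain ⟨hjlen, hjeq⟩ := (mem_block S p j).mp (hw1.mem (by simp))
      have hkj : k ≤ j := hk j (by simp)
      have hs2 : w2.Pairwise (· < ·) := hs.sublist (List.sublist_append_right _ _)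
      have hgt : ∀ x ∈ w2, j + 1 ≤ x := by
        intro x hx
        have := List.rel_of_pairwise_cons (show ((j :: w2).Pairwise (· < ·)) from hs) hx
        omega
      obtain ⟨v', hv1, hv2, hv3⟩ := ih w2 (j + 1) hw2 hs2 hgt
      refine ⟨p :: v', hv1.cons₂ p, ?_, by simpa using hv3⟩
      apply sublist_cons_of_index p (j - k)
      · rw [List.getElem?_drop]
        have : k + (j - k) = j := by omega
        rw [this]; exact hjeq
      · rw [List.drop_drop]
        have : k + (j - k + 1) = j + 1 := by omega
        rw [this]; exact hv2

lemma backward (S : List α) :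
    ∀ (P v : List α) (k : ℕ), v <+ P → v <+ S.drop k →
      ∃ w : List ℕ, w <+ huntList P S ∧ w.Pairwise (· < ·) ∧ (∀ x ∈ w, k ≤ x) ∧
        w.length = v.length := by
  intro P
  induction P with
  | nil =>
    intro v k hv _
    rw [List.sublist_nil] at hv
    subst hv
    exact ⟨[], by simp [huntList]⟩
  | cons p P' ih =>
    intro v k hvP hvS
    rw [huntList, List.map_cons, List.flatten_cons]
    cases hvP with
    | cons _ hv' =>
      obtain ⟨w, hw1, hw2, hw3, hw4⟩ := ih v k hv' hvS
      exact ⟨w, hw1.trans (List.sublist_append_right _ _), hw2, hw3, hw4⟩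
    | cons_cons _ hv' =>
      rename_i v'
      obtain ⟨m, hm, hma, hmt⟩ := exists_index_of_cons_sublist p v' _ hvS
      rw [List.length_drop] at hm
      rw [List.getElem?_drop] at hma
      rw [List.drop_drop] at hmt
      have hj1 : k + (m + 1) = (k + m) + 1 := by omega
      rw [hj1] at hmt
      obtain ⟨w', hw1, hw2, hw3, hw4⟩ := ih v' ((k + m) + 1) hv' hmt
      refine ⟨(k + m) :: w', ?_, ?_, ?_, by simpa using hw4⟩
      · have hmem : (k + m) ∈ ((List.range S.length).filter
            (fun j => S[j]? = some p)).reverse :=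
          (mem_block S p (k + m)).mpr ⟨by omega, hma⟩
        exact (List.singleton_sublist.mpr hmem).append hw1
      · rw [List.pairwise_cons]
        exact ⟨fun x hx => by have := hw3 x hx; omega, hw2⟩
      · intro x hx
        rcases List.mem_cons.mp hx with rfl | hx
        · omega
        · have := hw3 x hx; omega

end Aux

theorem hunt_szymanski_reduction {α : Type*} [DecidableEq α] (P S : List α) :
    lisLen (huntList P S) = lcsLen P S := by
  have hset : {n | ∃ w : List ℕ, w.Sublist (huntList P S) ∧ w.Pairwise (· < ·) ∧ w.length = n}
      = {n | ∃ w : List α, w.Sublist P ∧ w.Sublist S ∧ w.length = n} := by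
    ext n
    constructor
    · rintro ⟨w, hw, hs, rfl⟩
      obtain ⟨v, h1, h2, h3⟩ := forward S P w 0 hw hs (by simp)
      exact ⟨v, h1, by simpa using h2, h3⟩
    · rintro ⟨v, h1, h2, rfl⟩
      obtain ⟨w, hw, hs, _, h4⟩ := backward S P v 0 h1 (by simpa using h2)
      exact ⟨w, hw, hs, h4⟩
  rw [lisLen, lcsLen, hset]
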